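/- Let ε > 0, let r ≥ 1, and let σ_1, …, σ_r : ℝ → [0,∞) be Schwartz functions with ‖σ_i‖₁ + ‖σ_i'‖₁ ≤ 3/4 and ‖σ_i'‖_∞ ≤ ε for each i. Then sup_{m∈ℤ} |(σ_1∗⋯∗σ_r)(m) − ([σ_1]∗⋯∗[σ_r])(m)| < 3ε, where the first convolution is over ℝ and the second is over ℤ. -/

import Mathlib

open MeasureTheory

/-- Convolution of functions on `ℝ`. -/
noncomputable def rconv (f g : ℝ → ℝ) : ℝ → ℝ := fun x => ∫ y : ℝ, f y * g (x - y)

/-- Iterated convolution on `ℝ`. -/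
noncomputable def iConvR : (m : ℕ) → (Fin (m + 1) → ℝ → ℝ) → ℝ → ℝ
  | 0, f => f 0
  | m + 1, f => rconv (f 0) (iConvR m (fun i => f i.succ))

/-- Discrete convolution of functions on `ℤ`. -/
noncomputable def zconv (A B : ℤ → ℝ) : ℤ → ℝ := fun n => ∑' p : ℤ, A p * B (n - p)

/-- Iterated discrete convolution. -/
noncomputable def iConv : (m : ℕ) → (Fin (m + 1) → ℤ → ℝ) → ℤ → ℝ
  | 0, A => A 0
  | m + 1, A => zconv (A 0) (iConv m (fun i => A i.succ))

open Set
open scoped Convolution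

private lemma abs_int_le {f : ℝ → ℝ} {s : Set ℝ} :
    |∫ x in s, f x| ≤ ∫ x in s, |f x| := by
  simpa [Real.norm_eq_abs] using
    norm_integral_le_integral_norm (μ := volume.restrict s) f

private lemma cells_univ : (⋃ p : ℤ, Set.Ioc (p : ℝ) (p + 1)) = Set.univ :=
  iUnion_Ioc_intCast ℝ

private lemma cells_disj : Pairwise (Function.onFun Disjoint fun p : ℤ => Set.Ioc (p : ℝ) (p + 1)) := by
  intro p q hpq
  simp only [Function.onFun]
  rw [Set.Ioc_disjoint_Ioc]
  rcases lt_or_gt_of_ne hpq with h | h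
  · have : (p : ℝ) + 1 ≤ q := by exact_mod_cast h
    exact min_le_of_left_le (this.trans (le_max_right _ _))
  · have : (q : ℝ) + 1 ≤ p := by exact_mod_cast h
    exact min_le_of_right_le (this.trans (le_max_left _ _))

private lemma em_hasSum {h : ℝ → ℝ} (hi : Integrable h) :
    HasSum (fun p : ℤ => ∫ x in Set.Ioc (p : ℝ) (p + 1), h x) (∫ x, h x) := by
  have := hasSum_integral_iUnion (μ := volume) (f := h)
    (s := fun p : ℤ => Set.Ioc (p : ℝ) (p + 1))
    (fun _ => measurableSet_Ioc) cells_disj (by rw [cells_univ]; exact hi.integrableOn)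
  rwa [cells_univ, setIntegral_univ] at this

/-- One-cell estimate. -/
private lemma em_cell {h h' : ℝ → ℝ} (hd : ∀ x, HasDerivAt h (h' x) x)
    (hi' : Integrable h') (p : ℤ) :
    |(∫ x in Set.Ioc (p : ℝ) (p + 1), h x) - h p| ≤ ∫ x in Set.Ioc (p : ℝ) (p + 1), |h' x| := by
  have hmeas : MeasurableSet (Set.Ioc (p : ℝ) (p + 1)) := measurableSet_Ioc
  have hInt : IntegrableOn h (Set.Ioc (p : ℝ) (p + 1)) := by
    -- h is continuous (differentiable) hence integrable on a bounded interval
    have hc : Continuous h := by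
      have : Differentiable ℝ h := fun x => (hd x).differentiableAt
      exact this.continuous
    exact hc.integrableOn_Ioc
  have key : ∀ x ∈ Set.Ioc (p : ℝ) (p + 1),
      |h x - h p| ≤ ∫ t in Set.Ioc (p : ℝ) (p + 1), |h' t| := by
    intro x hx
    have hsub : h x - h p = ∫ t in (p : ℝ)..x, h' t := by
      rw [intervalIntegral.integral_eq_sub_of_hasDerivAt (fun t _ => hd t)
        hi'.intervalIntegrable]
    rw [hsub]
    have hx1 : (p : ℝ) ≤ x := le_of_lt hx.1
    rw [intervalIntegral.integral_of_le hx1]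
    calc |∫ t in Set.Ioc (p : ℝ) x, h' t| ≤ ∫ t in Set.Ioc (p : ℝ) x, |h' t| := by
          exact abs_int_le
      _ ≤ ∫ t in Set.Ioc (p : ℝ) (p + 1), |h' t| := by
          apply setIntegral_mono_set (hi'.abs.integrableOn)
          · filter_upwards with t using abs_nonneg _
          · exact HasSubset.Subset.eventuallyLE (Set.Ioc_subset_Ioc_right hx.2)
  have hconst : h (p : ℝ) = (volume (Set.Ioc (p : ℝ) (p + 1))).toReal⁻¹ * 0 + h p := by simp
  -- ∫ in cell of h  minus  h p = ∫ in cell (h x - h p) since measure of cell is 1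
  have hvol : (volume (Set.Ioc (p : ℝ) (p + 1))).toReal = 1 := by
    simp [Real.volume_Ioc]
  have : (∫ x in Set.Ioc (p : ℝ) (p + 1), h x) - h p
      = ∫ x in Set.Ioc (p : ℝ) (p + 1), (h x - h p) := by
    rw [integral_sub hInt (integrableOn_const (by simp [Real.volume_Ioc]))]
    simp [hvol]
  rw [this]
  calc |∫ x in Set.Ioc (p : ℝ) (p + 1), (h x - h p)|
      ≤ ∫ x in Set.Ioc (p : ℝ) (p + 1), |h x - h p| := abs_int_le
    _ ≤ ∫ x in Set.Ioc (p : ℝ) (p + 1), (∫ t in Set.Ioc (p : ℝ) (p + 1), |h' t|) := by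
        apply setIntegral_mono_on
        · exact (hInt.sub (integrableOn_const (by simp [Real.volume_Ioc]))).abs
        · exact integrableOn_const (by simp [Real.volume_Ioc])
        · exact hmeas
        · exact key
    _ = ∫ t in Set.Ioc (p : ℝ) (p + 1), |h' t| := by
        rw [setIntegral_const]
        simp [hvol]

private lemma em_main {h h' : ℝ → ℝ} (hd : ∀ x, HasDerivAt h (h' x) x)
    (hi : Integrable h) (hi' : Integrable h') :
    Summable (fun p : ℤ => h p) ∧ |(∑' p : ℤ, h p) - ∫ x, h x| ≤ ∫ x, |h' x| := by
  have hS := em_hasSum hi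
  have hS' := em_hasSum hi'.abs
  have hdiff : ∀ p : ℤ, |h p - ∫ x in Set.Ioc (p : ℝ) (p + 1), h x|
      ≤ ∫ x in Set.Ioc (p : ℝ) (p + 1), |h' x| := by
    intro p; rw [abs_sub_comm]; exact em_cell hd hi' p
  have hsum_diff : Summable (fun p : ℤ => h p - ∫ x in Set.Ioc (p : ℝ) (p + 1), h x) :=
    Summable.of_norm_bounded hS'.summable (fun p => by
      simpa [Real.norm_eq_abs] using hdiff p)
  have hsum : Summable (fun p : ℤ => h p) := by
    have := hsum_diff.add hS.summable
    simpa using this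
  refine ⟨hsum, ?_⟩
  have key : (∑' p : ℤ, h p) - ∫ x, h x
      = ∑' p : ℤ, (h p - ∫ x in Set.Ioc (p : ℝ) (p + 1), h x) := by
    rw [Summable.tsum_sub hsum hS.summable, hS.tsum_eq]
  rw [key]
  calc |∑' p : ℤ, (h p - ∫ x in Set.Ioc (p : ℝ) (p + 1), h x)|
      ≤ ∑' p : ℤ, |h p - ∫ x in Set.Ioc (p : ℝ) (p + 1), h x| := by
        simpa [Real.norm_eq_abs] using
          norm_tsum_le_tsum_norm (f := fun p : ℤ => h p - ∫ x in Set.Ioc (p : ℝ) (p + 1), h x)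
            (by simpa [Real.norm_eq_abs] using
              hsum_diff.abs)
    _ ≤ ∑' p : ℤ, ∫ x in Set.Ioc (p : ℝ) (p + 1), |h' x| :=
        Summable.tsum_le_tsum hdiff hsum_diff.abs hS'.summable
    _ = ∫ x, |h' x| := hS'.tsum_eq

private lemma sup_le_int_add_int {h h' : ℝ → ℝ} (hd : ∀ x, HasDerivAt h (h' x) x)
    (hnn : ∀ x, 0 ≤ h x) (hi : Integrable h) (hi' : Integrable h') (x : ℝ) :
    h x ≤ (∫ t, h t) + ∫ t, |h' t| := by
  have hc : Continuous h := Differentiable.continuous (fun y => (hd y).differentiableAt)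
  obtain ⟨y, hy, hmin⟩ := (isCompact_Icc (a := x - 1) (b := x)).exists_isMinOn
    (Set.nonempty_Icc.2 (by linarith)) hc.continuousOn
  have h1 : h y ≤ ∫ t, h t := by
    have e1 : h y = ∫ _t in Set.Ioc (x - 1) x, h y := by
      rw [setIntegral_const]; simp [Real.volume_Ioc]
    rw [e1]
    calc (∫ _t in Set.Ioc (x - 1) x, h y) ≤ ∫ t in Set.Ioc (x - 1) x, h t := by
          apply setIntegral_mono_on
          · exact integrableOn_const (by simp [Real.volume_Ioc])
          · exact hi.integrableOn
          · exact measurableSet_Ioc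
          · exact fun t ht => hmin (Set.Ioc_subset_Icc_self ht)
      _ ≤ ∫ t, h t := setIntegral_le_integral hi (Filter.Eventually.of_forall hnn)
  have h2 : h x = h y + ∫ t in y..x, h' t := by
    rw [intervalIntegral.integral_eq_sub_of_hasDerivAt (fun t _ => hd t) hi'.intervalIntegrable]
    ring
  have h3 : |∫ t in y..x, h' t| ≤ ∫ t, |h' t| := by
    have hy2 : y ≤ x := hy.2
    rw [intervalIntegral.integral_of_le hy2]
    calc |∫ t in Set.Ioc y x, h' t| ≤ ∫ t in Set.Ioc y x, |h' t| := abs_int_le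
      _ ≤ ∫ t, |h' t| := setIntegral_le_integral hi'.abs
          (Filter.Eventually.of_forall fun t => abs_nonneg _)
  rw [h2]
  have := (abs_le.1 h3).2
  linarith

section Schwartz

variable (f : SchwartzMap ℝ ℝ)

private lemma schwartz_hasDerivAt (x : ℝ) : HasDerivAt f (deriv f x) x :=
  f.differentiableAt.hasDerivAt

private lemma schwartz_deriv_integrable : Integrable (deriv (f : ℝ → ℝ)) := by
  have : (deriv (f : ℝ → ℝ)) = fun x => (SchwartzMap.derivCLM ℝ ℝ f) x := by
    funext x; rw [SchwartzMap.derivCLM_apply]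
  rw [this]
  exact (SchwartzMap.derivCLM ℝ ℝ f).integrable

private lemma schwartz_deriv_continuous : Continuous (deriv (f : ℝ → ℝ)) := by
  have : (deriv (f : ℝ → ℝ)) = fun x => (SchwartzMap.derivCLM ℝ ℝ f) x := by
    funext x; rw [SchwartzMap.derivCLM_apply]
  rw [this]
  exact (SchwartzMap.derivCLM ℝ ℝ f).continuous

end Schwartz

private lemma step
    (ε Mg Ig Dg E : ℝ) (hMg : 0 ≤ Mg) (hIg : 0 ≤ Ig) (hDg : 0 ≤ Dg) (hE : 0 ≤ E)
    (f : SchwartzMap ℝ ℝ) (hfnn : ∀ x, 0 ≤ f x)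
    (hfL1 : (∫ x : ℝ, |f x|) + (∫ x : ℝ, |deriv (f : ℝ → ℝ) x|) ≤ 3 / 4)
    (hfLinf : ∀ x, |deriv (f : ℝ → ℝ) x| ≤ ε)
    (g g' : ℝ → ℝ) (A : ℤ → ℝ)
    (hcg : Continuous g) (hcg' : Continuous g') (hdg : ∀ x, HasDerivAt g (g' x) x)
    (hgnn : ∀ x, 0 ≤ g x) (hgM : ∀ x, g x ≤ Mg) (hg'D : ∀ x, |g' x| ≤ Dg)
    (hgi : Integrable g) (hgI : (∫ x, g x) ≤ Ig)
    (hAnn : ∀ n, 0 ≤ A n) (hAM : ∀ n, A n ≤ Mg)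
    (hGA : ∀ n : ℤ, |g n - A n| ≤ E) :
    Continuous (rconv (f : ℝ → ℝ) g) ∧
    (∃ G' : ℝ → ℝ, Continuous G' ∧ (∀ x, HasDerivAt (rconv (f : ℝ → ℝ) g) (G' x) x) ∧
      (∀ x, |G' x| ≤ 3 / 4 * Dg)) ∧
    (∀ x, 0 ≤ rconv (f : ℝ → ℝ) g x) ∧
    (∀ x, rconv (f : ℝ → ℝ) g x ≤ 3 / 4 * Mg) ∧
    Integrable (rconv (f : ℝ → ℝ) g) ∧
    (∫ x, rconv (f : ℝ → ℝ) g x) ≤ 3 / 4 * Ig ∧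
    (∀ n, 0 ≤ zconv (fun p : ℤ => f p) A n) ∧
    (∀ n, zconv (fun p : ℤ => f p) A n ≤ 3 / 4 * Mg) ∧
    (∀ n : ℤ, |rconv (f : ℝ → ℝ) g n - zconv (fun p : ℤ => f p) A n|
      ≤ ε * Ig + 3 / 4 * Dg + 3 / 4 * E) := by
  have hfi : Integrable (f : ℝ → ℝ) := f.integrable
  have hfi' : Integrable (deriv (f : ℝ → ℝ)) := schwartz_deriv_integrable f
  have hfabs : (∫ x : ℝ, |f x|) = ∫ x : ℝ, f x := by
    congr 1; funext x; exact abs_of_nonneg (hfnn x)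
  have hIf0 : 0 ≤ ∫ x : ℝ, f x := integral_nonneg hfnn
  have hDf0 : 0 ≤ ∫ x : ℝ, |deriv (f : ℝ → ℝ) x| := integral_nonneg fun x => abs_nonneg _
  have hIf : (∫ x : ℝ, f x) ≤ 3 / 4 := by rw [← hfabs]; linarith
  have hε0 : 0 ≤ ε := le_trans (abs_nonneg _) (hfLinf 0)
  have hfc : Continuous (f : ℝ → ℝ) := f.continuous
  obtain ⟨hsumf, hemf⟩ := em_main (h := (f : ℝ → ℝ)) (h' := deriv (f : ℝ → ℝ))
    (fun x => schwartz_hasDerivAt f x) hfi hfi'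
  have hSf0 : 0 ≤ ∑' p : ℤ, f p := tsum_nonneg fun p => hfnn p
  have hSf : (∑' p : ℤ, f p) ≤ 3 / 4 := by
    have h2 := (abs_le.1 hemf).2
    rw [hfabs] at hfL1
    linarith
  -- integrability of the various integrands
  have hintg : ∀ x : ℝ, Integrable (fun y => f y * g (x - y)) := by
    intro x
    have : Integrable (fun y => g (x - y) * f y) :=
      hfi.bdd_mul ((hcg.comp (continuous_const.sub continuous_id)).aestronglyMeasurable)
        (c := Mg) (Filter.Eventually.of_forall fun y => by rw [Real.norm_eq_abs, abs_of_nonneg (hgnn _)]; exact hgM _)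
    simpa [mul_comm] using this
  have hintg' : ∀ x : ℝ, Integrable (fun y => f y * g' (x - y)) := by
    intro x
    have : Integrable (fun y => g' (x - y) * f y) :=
      hfi.bdd_mul ((hcg'.comp (continuous_const.sub continuous_id)).aestronglyMeasurable)
        (c := Dg) (Filter.Eventually.of_forall fun y => by rw [Real.norm_eq_abs]; exact hg'D _)
    simpa [mul_comm] using this
  have hintf'g : ∀ x : ℝ, Integrable (fun y => deriv (f : ℝ → ℝ) y * g (x - y)) := by
    intro x
    have : Integrable (fun y => g (x - y) * deriv (f : ℝ → ℝ) y) :=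
      hfi'.bdd_mul ((hcg.comp (continuous_const.sub continuous_id)).aestronglyMeasurable)
        (c := Mg) (Filter.Eventually.of_forall fun y => by rw [Real.norm_eq_abs, abs_of_nonneg (hgnn _)]; exact hgM _)
    simpa [mul_comm] using this
  -- nonnegativity and boundedness of G = rconv f g
  have hGnn : ∀ x, 0 ≤ rconv (f : ℝ → ℝ) g x := fun x =>
    integral_nonneg fun y => mul_nonneg (hfnn y) (hgnn _)
  have hGM : ∀ x, rconv (f : ℝ → ℝ) g x ≤ 3 / 4 * Mg := by
    intro x
    have h1 : rconv (f : ℝ → ℝ) g x ≤ ∫ y : ℝ, f y * Mg :=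
      integral_mono (hintg x) (hfi.mul_const Mg)
        (fun y => mul_le_mul_of_nonneg_left (hgM _) (hfnn y))
    calc rconv (f : ℝ → ℝ) g x ≤ ∫ y : ℝ, f y * Mg := h1
      _ = (∫ y : ℝ, f y) * Mg := by rw [integral_mul_const]
      _ ≤ 3 / 4 * Mg := mul_le_mul_of_nonneg_right hIf hMg
  -- continuity of G
  have hGc : Continuous (rconv (f : ℝ → ℝ) g) := by
    apply continuous_of_dominated (bound := fun y => f y * Mg)
      (F := fun x y => f y * g (x - y))
    · exact fun x => (hintg x).aestronglyMeasurable
    · intro x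
      filter_upwards with y
      rw [Real.norm_eq_abs, abs_mul, abs_of_nonneg (hfnn y), abs_of_nonneg (hgnn _)]
      exact mul_le_mul_of_nonneg_left (hgM _) (hfnn y)
    · exact hfi.mul_const Mg
    · filter_upwards with y
      exact continuous_const.mul (hcg.comp (continuous_id.sub continuous_const))
  -- the derivative G'
  have hG'c : Continuous (fun x => ∫ y : ℝ, f y * g' (x - y)) := by
    apply continuous_of_dominated (bound := fun y => f y * Dg)
      (F := fun x y => f y * g' (x - y))
    · exact fun x => (hintg' x).aestronglyMeasurable
    · intro x
      filter_upwards with y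
      rw [Real.norm_eq_abs, abs_mul, abs_of_nonneg (hfnn y)]
      exact mul_le_mul_of_nonneg_left (hg'D _) (hfnn y)
    · exact hfi.mul_const Dg
    · filter_upwards with y
      exact continuous_const.mul (hcg'.comp (continuous_id.sub continuous_const))
  have hGd : ∀ x, HasDerivAt (rconv (f : ℝ → ℝ) g) (∫ y : ℝ, f y * g' (x - y)) x := by
    intro x
    have key := hasDerivAt_integral_of_dominated_loc_of_deriv_le (μ := volume)
      (F := fun x y => f y * g (x - y)) (F' := fun x y => f y * g' (x - y))
      (x₀ := x) (s := Set.univ) (bound := fun y => |f y| * Dg) Filter.univ_mem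
      (Filter.Eventually.of_forall fun z => (hintg z).aestronglyMeasurable)
      (hintg x) ((hintg' x).aestronglyMeasurable)
      (Filter.Eventually.of_forall fun y z _ => by
        rw [Real.norm_eq_abs, abs_mul]
        exact mul_le_mul_of_nonneg_left (hg'D _) (abs_nonneg _))
      (hfi.abs.mul_const Dg)
      (Filter.Eventually.of_forall fun y z _ => by
        have hinner : HasDerivAt (fun w : ℝ => w - y) 1 z := by
          simpa using (hasDerivAt_id z).sub_const y
        have h1 : HasDerivAt (fun w : ℝ => g (w - y)) (g' (z - y)) z := by
          have := (hdg (z - y)).comp z hinner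
          simpa [Function.comp_def] using this
        exact h1.const_mul (f y))
    exact key.2
  have hG'D : ∀ x, |∫ y : ℝ, f y * g' (x - y)| ≤ 3 / 4 * Dg := by
    intro x
    calc |∫ y : ℝ, f y * g' (x - y)| ≤ ∫ y : ℝ, |f y * g' (x - y)| := by
          simpa only [Real.norm_eq_abs] using
            norm_integral_le_integral_norm (μ := volume) (fun y => f y * g' (x - y))
      _ ≤ ∫ y : ℝ, f y * Dg := by
          apply integral_mono (hintg' x).abs (hfi.mul_const Dg)
          intro y
          dsimp only
          rw [abs_mul, abs_of_nonneg (hfnn y)]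
          exact mul_le_mul_of_nonneg_left (hg'D _) (hfnn y)
      _ = (∫ y : ℝ, f y) * Dg := by rw [integral_mul_const]
      _ ≤ 3 / 4 * Dg := mul_le_mul_of_nonneg_right hIf hDg
  -- integrability of G and the integral bound, via mathlib convolution
  have hGeq : rconv (f : ℝ → ℝ) g
      = ((f : ℝ → ℝ) ⋆[ContinuousLinearMap.lsmul ℝ ℝ, volume] g) := by
    funext x
    rw [convolution_def]
    simp [rconv, ContinuousLinearMap.lsmul_apply, smul_eq_mul]
  have hGi : Integrable (rconv (f : ℝ → ℝ) g) := by
    rw [hGeq]; exact hfi.integrable_convolution _ hgi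
  have hGI : (∫ x, rconv (f : ℝ → ℝ) g x) ≤ 3 / 4 * Ig := by
    have hIg0 : 0 ≤ ∫ x, g x := integral_nonneg hgnn
    have := integral_convolution (L := ContinuousLinearMap.lsmul ℝ ℝ)
      (μ := volume) (ν := volume) hfi hgi
    rw [hGeq]
    calc (∫ x, ((f : ℝ → ℝ) ⋆[ContinuousLinearMap.lsmul ℝ ℝ, volume] g) x)
        = (∫ x : ℝ, f x) * (∫ x, g x) := by rw [this]; simp [smul_eq_mul]
      _ ≤ 3 / 4 * Ig := mul_le_mul hIf hgI hIg0 (by norm_num)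
  -- discrete side
  have hzsum : ∀ n : ℤ, Summable (fun p : ℤ => f p * A (n - p)) := fun n =>
    Summable.of_nonneg_of_le (fun p => mul_nonneg (hfnn _) (hAnn _))
      (fun p => mul_le_mul_of_nonneg_left (hAM _) (hfnn _)) (hsumf.mul_right Mg)
  have hznn : ∀ n, 0 ≤ zconv (fun p : ℤ => f p) A n := fun n =>
    tsum_nonneg fun p => mul_nonneg (hfnn _) (hAnn _)
  have hzM : ∀ n, zconv (fun p : ℤ => f p) A n ≤ 3 / 4 * Mg := by
    intro n
    calc zconv (fun p : ℤ => f p) A n ≤ ∑' p : ℤ, f p * Mg :=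
          Summable.tsum_le_tsum (fun p => mul_le_mul_of_nonneg_left (hAM _) (hfnn _))
            (hzsum n) (hsumf.mul_right Mg)
      _ = (∑' p : ℤ, f p) * Mg := tsum_mul_right
      _ ≤ 3 / 4 * Mg := mul_le_mul_of_nonneg_right hSf hMg
  -- the main estimate
  have hmain : ∀ n : ℤ, |rconv (f : ℝ → ℝ) g n - zconv (fun p : ℤ => f p) A n|
      ≤ ε * Ig + 3 / 4 * Dg + 3 / 4 * E := by
    intro n
    set h : ℝ → ℝ := fun y => f y * g ((n : ℝ) - y) with hhdef
    set h' : ℝ → ℝ := fun y => deriv (f : ℝ → ℝ) y * g ((n : ℝ) - y) - f y * g' ((n : ℝ) - y)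
      with hh'def
    have hdh : ∀ y, HasDerivAt h (h' y) y := by
      intro y
      have hinner : HasDerivAt (fun w : ℝ => (n : ℝ) - w) (-1) y := by
        simpa [Pi.sub_def] using (hasDerivAt_const y (n : ℝ)).sub (hasDerivAt_id y)
      have h1 : HasDerivAt (fun w : ℝ => g ((n : ℝ) - w)) (g' ((n : ℝ) - y) * (-1)) y :=
        (hdg _).comp y hinner
      have h2 := (schwartz_hasDerivAt f y).mul h1
      refine h2.congr_deriv ?_
      simp [hh'def]; ring
    have hih : Integrable h := hintg (n : ℝ)
    have hih' : Integrable h' := (hintf'g (n : ℝ)).sub (hintg' (n : ℝ))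
    obtain ⟨hsumh, hemh⟩ := em_main hdh hih hih'
    have hbound : (∫ y, |h' y|) ≤ ε * Ig + 3 / 4 * Dg := by
      have hgsub : Integrable (fun y => g ((n : ℝ) - y)) := hgi.comp_sub_left _
      have hptw : ∀ y, |h' y| ≤ ε * g ((n : ℝ) - y) + f y * Dg := by
        intro y
        have e1 : |deriv (f : ℝ → ℝ) y * g ((n : ℝ) - y)| ≤ ε * g ((n : ℝ) - y) := by
          rw [abs_mul, abs_of_nonneg (hgnn _)]
          exact mul_le_mul_of_nonneg_right (hfLinf y) (hgnn _)
        have e2 : |f y * g' ((n : ℝ) - y)| ≤ f y * Dg := by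
          rw [abs_mul, abs_of_nonneg (hfnn y)]
          exact mul_le_mul_of_nonneg_left (hg'D _) (hfnn y)
        calc |h' y| ≤ |deriv (f : ℝ → ℝ) y * g ((n : ℝ) - y)| + |f y * g' ((n : ℝ) - y)| :=
              abs_sub _ _
          _ ≤ ε * g ((n : ℝ) - y) + f y * Dg := add_le_add e1 e2
      calc (∫ y, |h' y|) ≤ ∫ y, (ε * g ((n : ℝ) - y) + f y * Dg) :=
            integral_mono hih'.abs ((hgsub.const_mul ε).add (hfi.mul_const Dg)) hptw
        _ = ε * (∫ y, g ((n : ℝ) - y)) + (∫ y : ℝ, f y) * Dg := by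
            rw [integral_add (hgsub.const_mul ε) (hfi.mul_const Dg),
              integral_const_mul, integral_mul_const]
        _ = ε * (∫ y, g y) + (∫ y : ℝ, f y) * Dg := by
            rw [integral_sub_left_eq_self g volume ((n : ℝ))]
        _ ≤ ε * Ig + 3 / 4 * Dg :=
            add_le_add (mul_le_mul_of_nonneg_left hgI hε0)
              (mul_le_mul_of_nonneg_right hIf hDg)
    have hdiff_sums : |(∑' p : ℤ, h (p : ℝ)) - zconv (fun p : ℤ => f p) A n| ≤ 3 / 4 * E := by
      have habs : Summable fun p : ℤ => |h (p : ℝ) - f (p : ℝ) * A (n - p)| :=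
        (hsumh.sub (hzsum n)).abs
      have heq : ∀ p : ℤ, |h (p : ℝ) - f (p : ℝ) * A (n - p)| ≤ f (p : ℝ) * E := by
        intro p
        have : h (p : ℝ) - f (p : ℝ) * A (n - p)
            = f (p : ℝ) * (g ((n : ℝ) - (p : ℝ)) - A (n - p)) := by
          simp only [hhdef]; ring
        rw [this, abs_mul, abs_of_nonneg (hfnn _)]
        apply mul_le_mul_of_nonneg_left _ (hfnn _)
        have hcast : ((n : ℝ) - (p : ℝ)) = ((n - p : ℤ) : ℝ) := by push_cast; ring
        rw [hcast]
        exact hGA (n - p)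
      rw [zconv, ← Summable.tsum_sub hsumh (hzsum n)]
      calc |∑' p : ℤ, (h (p : ℝ) - f (p : ℝ) * A (n - p))|
          ≤ ∑' p : ℤ, |h (p : ℝ) - f (p : ℝ) * A (n - p)| := by
            simpa [Real.norm_eq_abs] using
              norm_tsum_le_tsum_norm (f := fun p : ℤ => h (p : ℝ) - f (p : ℝ) * A (n - p))
                (by simpa [Real.norm_eq_abs] using habs)
        _ ≤ ∑' p : ℤ, f (p : ℝ) * E :=
            Summable.tsum_le_tsum heq habs (hsumf.mul_right E)
        _ = (∑' p : ℤ, f (p : ℝ)) * E := tsum_mul_right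
        _ ≤ 3 / 4 * E := mul_le_mul_of_nonneg_right hSf hE
    have hr : rconv (f : ℝ → ℝ) g (n : ℝ) = ∫ y, h y := rfl
    calc |rconv (f : ℝ → ℝ) g (n : ℝ) - zconv (fun p : ℤ => f p) A n|
        ≤ |(∫ y, h y) - ∑' p : ℤ, h (p : ℝ)|
          + |(∑' p : ℤ, h (p : ℝ)) - zconv (fun p : ℤ => f p) A n| := by
          rw [hr]; exact abs_sub_le _ _ _
      _ ≤ (ε * Ig + 3 / 4 * Dg) + 3 / 4 * E := by
          apply add_le_add _ hdiff_sums
          rw [abs_sub_comm]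
          exact le_trans hemh hbound
      _ = ε * Ig + 3 / 4 * Dg + 3 / 4 * E := by ring
  exact ⟨hGc, ⟨fun x => ∫ y : ℝ, f y * g' (x - y), hG'c, hGd, hG'D⟩, hGnn, hGM, hGi, hGI,
    hznn, hzM, hmain⟩


private lemma main_ind (ε : ℝ) : ∀ (m : ℕ) (σ : Fin (m + 1) → SchwartzMap ℝ ℝ),
    (∀ i x, 0 ≤ σ i x) →
    (∀ i, (∫ x : ℝ, |σ i x|) + (∫ x : ℝ, |deriv (fun y => σ i y) x|) ≤ 3 / 4) →
    (∀ i, ∀ x : ℝ, |deriv (fun y => σ i y) x| ≤ ε) →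
    Continuous (iConvR m fun i => σ i) ∧
    (∃ G' : ℝ → ℝ, Continuous G' ∧ (∀ x, HasDerivAt (iConvR m fun i => σ i) (G' x) x) ∧
      (∀ x, |G' x| ≤ ε * (3 / 4) ^ m)) ∧
    (∀ x, 0 ≤ iConvR m (fun i => σ i) x) ∧
    (∀ x, iConvR m (fun i => σ i) x ≤ (3 / 4) ^ (m + 1)) ∧
    Integrable (iConvR m fun i => σ i) ∧
    ((∫ x, iConvR m (fun i => σ i) x) ≤ (3 / 4) ^ (m + 1)) ∧
    (∀ n : ℤ, 0 ≤ iConv m (fun i p => σ i (p : ℝ)) n) ∧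
    (∀ n : ℤ, iConv m (fun i p => σ i (p : ℝ)) n ≤ (3 / 4) ^ (m + 1)) ∧
    (∀ n : ℤ, |iConvR m (fun i => σ i) n - iConv m (fun i p => σ i (p : ℝ)) n|
      ≤ 2 * m * ε * (3 / 4) ^ m) := by
  intro m
  induction m with
  | zero =>
    intro σ hnn hL1 hLinf
    set f := σ 0
    have hfi : Integrable (f : ℝ → ℝ) := f.integrable
    have hfi' : Integrable (deriv (f : ℝ → ℝ)) := schwartz_deriv_integrable f
    have hfabs : (∫ x : ℝ, |f x|) = ∫ x : ℝ, f x := by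
      congr 1; funext x; exact abs_of_nonneg (hnn 0 x)
    have hsup : ∀ x, f x ≤ 3 / 4 := by
      intro x
      have h1 := sup_le_int_add_int (fun x => schwartz_hasDerivAt f x) (hnn 0) hfi hfi' x
      have h2 := hL1 0
      rw [hfabs] at h2
      calc f x ≤ (∫ t : ℝ, f t) + ∫ t : ℝ, |deriv (f : ℝ → ℝ) t| := h1
        _ ≤ 3 / 4 := h2
    refine ⟨f.continuous, ⟨deriv (f : ℝ → ℝ), schwartz_deriv_continuous f,
      fun x => schwartz_hasDerivAt f x, fun x => by simpa using hLinf 0 x⟩,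
      fun x => hnn 0 x, fun x => by simpa [iConvR] using hsup x, hfi, ?_, fun n => hnn 0 n,
      fun n => by simpa [iConv] using hsup n, fun n => by simp [iConvR, iConv]⟩
    have := hL1 0
    have h0 : 0 ≤ ∫ x : ℝ, |deriv (f : ℝ → ℝ) x| := integral_nonneg fun x => abs_nonneg _
    have : (∫ x : ℝ, f x) ≤ 3 / 4 := by rw [← hfabs]; linarith
    simpa [iConvR] using this
  | succ m IH =>
    intro σ hnn hL1 hLinf
    have hε0 : 0 ≤ ε := le_trans (abs_nonneg _) (hLinf 0 0)
    obtain ⟨hc, ⟨G', hG'c, hGd, hG'D⟩, hgnn, hgM, hgi, hgI, hznn, hzM, hmain⟩ :=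
      IH (fun i => σ i.succ) (fun i x => hnn i.succ x) (fun i => hL1 i.succ)
        (fun i => hLinf i.succ)
    have hE0 : (0 : ℝ) ≤ 2 * m * ε * (3 / 4) ^ m := by positivity
    have hstep := step ε ((3 / 4) ^ (m + 1)) ((3 / 4) ^ (m + 1)) (ε * (3 / 4) ^ m)
      (2 * m * ε * (3 / 4) ^ m) (by positivity) (by positivity) (by positivity) hE0
      (σ 0) (hnn 0) (hL1 0) (hLinf 0)
      (iConvR m fun i => σ i.succ) G' (iConv m fun i p => σ i.succ (p : ℝ))
      hc hG'c hGd hgnn hgM hG'D hgi hgI hznn hzM hmain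
    obtain ⟨Hc, ⟨H', hH'c, hHd, hH'D⟩, Hnn, HM, Hi, HI, Hznn, HzM, Hmain⟩ := hstep
    have hRe : (iConvR (m + 1) fun i => σ i) = rconv ((σ 0 : ℝ → ℝ)) (iConvR m fun i => σ i.succ) := rfl
    have hZe : (iConv (m + 1) fun i p => σ i (p : ℝ))
        = zconv (fun p : ℤ => σ 0 (p : ℝ)) (iConv m fun i p => σ i.succ (p : ℝ)) := rfl
    rw [hRe, hZe]
    have hpow : ((3 : ℝ) / 4) ^ (m + 1 + 1) = 3 / 4 * (3 / 4) ^ (m + 1) := by ring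
    refine ⟨Hc, ⟨H', hH'c, hHd, ?_⟩, Hnn, ?_, Hi, ?_, Hznn, ?_, ?_⟩
    · intro x
      calc |H' x| ≤ 3 / 4 * (ε * (3 / 4) ^ m) := hH'D x
        _ = ε * (3 / 4) ^ (m + 1) := by ring
    · intro x
      calc rconv ((σ 0 : ℝ → ℝ)) (iConvR m fun i => σ i.succ) x
          ≤ 3 / 4 * (3 / 4) ^ (m + 1) := HM x
        _ = (3 / 4) ^ (m + 1 + 1) := by ring
    · rw [hpow]; exact HI
    · intro n; rw [hpow]; exact HzM n
    · intro n
      calc |rconv ((σ 0 : ℝ → ℝ)) (iConvR m fun i => σ i.succ) n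
            - zconv (fun p : ℤ => σ 0 (p : ℝ)) (iConv m fun i p => σ i.succ (p : ℝ)) n|
          ≤ ε * (3 / 4) ^ (m + 1) + 3 / 4 * (ε * (3 / 4) ^ m)
            + 3 / 4 * (2 * m * ε * (3 / 4) ^ m) := Hmain n
        _ = 2 * ((m + 1 : ℕ) : ℝ) * ε * (3 / 4) ^ (m + 1) := by push_cast; ring

private lemma numeric_bound : ∀ m : ℕ, 2 * (m : ℝ) * (3 / 4) ^ m ≤ 81 / 32 := by
  intro m
  induction m with
  | zero => norm_num
  | succ k ih =>
    rcases le_or_gt 3 k with hk | hk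
    · have hq : (0 : ℝ) ≤ (3 / 4) ^ k := by positivity
      have hk' : (3 : ℝ) ≤ k := by exact_mod_cast hk
      have : 2 * ((k : ℝ) + 1) * (3 / 4) ^ (k + 1) ≤ 2 * (k : ℝ) * (3 / 4) ^ k := by
        rw [pow_succ]
        nlinarith
      push_cast
      linarith
    · interval_cases k <;> norm_num

theorem compare_real_and_integer_convolutions (ε : ℝ) (hε : 0 < ε)
    (m : ℕ) (σ : Fin (m + 1) → SchwartzMap ℝ ℝ)
    (hnonneg : ∀ i x, 0 ≤ σ i x)
    (hL1 : ∀ i, (∫ x : ℝ, |σ i x|) + (∫ x : ℝ, |deriv (fun y => σ i y) x|) ≤ 3 / 4)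
    (hLinfty : ∀ i, ∀ x : ℝ, |deriv (fun y => σ i y) x| ≤ ε) :
    ∀ k : ℤ,
      |iConvR m (fun i => σ i) k -
          iConv m (fun i n => σ i (n : ℝ)) k| < 3 * ε := by
  intro k
  obtain ⟨-, -, -, -, -, -, -, -, hmain⟩ := main_ind ε m σ hnonneg hL1 hLinfty
  have h1 := hmain k
  have h2 := numeric_bound m
  have hq : (0 : ℝ) ≤ (3 / 4 : ℝ) ^ m := by positivity
  have h3 : 2 * (m : ℝ) * ε * (3 / 4) ^ m ≤ 81 / 32 * ε := by nlinarith
  calc |iConvR m (fun i => σ i) k - iConv m (fun i n => σ i (n : ℝ)) k|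
      ≤ 2 * m * ε * (3 / 4) ^ m := h1
    _ ≤ 81 / 32 * ε := h3
    _ < 3 * ε := by linarith
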